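/- Let y, γ ∈ ℝ, v > 0, β > 0, λ ∈ ℝ, and define α(o) = exp(o) + 1 (exponential activation plus one). Let L(o) = (1/2)·log(π/v) − α(o)·log(Ω) + (α(o) + 1/2)·log((y − γ)²·v + Ω) + log(Real.Gamma(α(o))) − log(Real.Gamma(α(o) + 1/2)) with Ω = 2β(1 + v), and R(o) = |y − γ|·(2v + α(o)). Then the derivative of the total loss o ↦ L(o) + λ·R(o) tends to 0 as o → −∞. -/

import Mathlib

open Real Filter

lemma hasDerivAt_realGamma {x : ℝ} (hx : 0 < x) :
    HasDerivAt Real.Gamma ((deriv Complex.Gamma x).re) x := by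
  refine HasDerivAt.real_of_complex ?_
  refine (Complex.differentiableAt_Gamma _ fun m => ?_).hasDerivAt
  intro h
  have h2 : (0:ℝ) < ((-(m:ℂ)).re) := h ▸ (by simpa using hx)
  simp only [Complex.neg_re, Complex.natCast_re, neg_pos] at h2
  exact absurd h2 (not_lt.mpr (Nat.cast_nonneg m))

lemma contOn_deriv_complexGamma :
    ContinuousOn (deriv Complex.Gamma) {s : ℂ | 0 < s.re} := by
  have hO : IsOpen {s : ℂ | 0 < s.re} := isOpen_lt continuous_const Complex.continuous_re
  have hA : AnalyticOnNhd ℂ Complex.Gamma {s : ℂ | 0 < s.re} := by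
    refine DifferentiableOn.analyticOnNhd (fun s hs => ?_) hO
    refine (Complex.differentiableAt_Gamma _ fun m => ?_).differentiableWithinAt
    intro h
    rw [h] at hs
    simp only [Set.mem_setOf_eq, Complex.neg_re, Complex.natCast_re, neg_pos] at hs
    exact absurd hs (not_lt.mpr (Nat.cast_nonneg m))
  exact (hA.deriv).continuousOn

lemma contAt_deriv_realGamma {x : ℝ} (hx : 0 < x) :
    ContinuousAt (deriv Real.Gamma) x := by
  have hO : IsOpen {s : ℂ | 0 < s.re} := isOpen_lt continuous_const Complex.continuous_re
  have heq : ∀ᶠ z in nhds x, (fun z : ℝ => (deriv Complex.Gamma z).re) z = deriv Real.Gamma z := by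
    filter_upwards [(isOpen_Ioi (a := (0:ℝ))).mem_nhds hx] with z hz
    exact ((hasDerivAt_realGamma hz).deriv).symm
  refine ContinuousAt.congr ?_ heq
  have h1 : ContinuousAt (deriv Complex.Gamma) (x : ℂ) :=
    (contOn_deriv_complexGamma.continuousAt (hO.mem_nhds (by simpa using hx)))
  exact Complex.continuous_re.continuousAt.comp
    (h1.comp Complex.continuous_ofReal.continuousAt)

/-- Exponential activation plus one. -/
noncomputable def expAlpha (o : ℝ) : ℝ := Real.exp o + 1

theorem stmt_12 (y γ v β lam : ℝ) (hv : 0 < v) (hβ : 0 < β) :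
    Tendsto
      (deriv (fun o : ℝ =>
        ((1 / 2) * Real.log (Real.pi / v)
          - expAlpha o * Real.log (2 * β * (1 + v))
          + (expAlpha o + 1 / 2) * Real.log ((y - γ) ^ 2 * v + 2 * β * (1 + v))
          + Real.log (Real.Gamma (expAlpha o))
          - Real.log (Real.Gamma (expAlpha o + 1 / 2)))
        + lam * (|y - γ| * (2 * v + expAlpha o))))
      atBot (nhds 0) := by
  set c1 := Real.log (2 * β * (1 + v)) with hc1
  set c2 := Real.log ((y - γ) ^ 2 * v + 2 * β * (1 + v)) with hc2
  set G : ℝ → ℝ := fun o =>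
    -c1 + c2 + deriv Real.Gamma (expAlpha o) / Real.Gamma (expAlpha o)
      - deriv Real.Gamma (expAlpha o + 1 / 2) / Real.Gamma (expAlpha o + 1 / 2)
      + lam * |y - γ| with hG
  have hαpos : ∀ o : ℝ, 0 < expAlpha o := fun o => by
    have := Real.exp_pos o; unfold expAlpha; linarith
  have hαpos' : ∀ o : ℝ, 0 < expAlpha o + 1 / 2 := fun o => by
    have := hαpos o; linarith
  have hderiv : ∀ o : ℝ, HasDerivAt (fun o : ℝ =>
        ((1 / 2) * Real.log (Real.pi / v)
          - expAlpha o * c1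
          + (expAlpha o + 1 / 2) * c2
          + Real.log (Real.Gamma (expAlpha o))
          - Real.log (Real.Gamma (expAlpha o + 1 / 2)))
        + lam * (|y - γ| * (2 * v + expAlpha o))) (Real.exp o * G o) o := by
    intro o
    have hα : HasDerivAt expAlpha (Real.exp o) o := (Real.hasDerivAt_exp o).add_const 1
    have hα' : HasDerivAt (fun o => expAlpha o + 1 / 2) (Real.exp o) o := hα.add_const _
    have hg1 : HasDerivAt Real.Gamma (deriv Real.Gamma (expAlpha o)) (expAlpha o) := by
      have h := hasDerivAt_realGamma (hαpos o)
      rwa [h.deriv]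
    have hg2 : HasDerivAt Real.Gamma (deriv Real.Gamma (expAlpha o + 1 / 2))
        (expAlpha o + 1 / 2) := by
      have h := hasDerivAt_realGamma (hαpos' o)
      rwa [h.deriv]
    have h4 : HasDerivAt (fun o => Real.log (Real.Gamma (expAlpha o)))
        ((deriv Real.Gamma (expAlpha o) * Real.exp o) / Real.Gamma (expAlpha o)) o :=
      (HasDerivAt.comp o hg1 hα).log (Real.Gamma_pos_of_pos (hαpos o)).ne'
    have h5 : HasDerivAt (fun o => Real.log (Real.Gamma (expAlpha o + 1 / 2)))
        ((deriv Real.Gamma (expAlpha o + 1 / 2) * Real.exp o) /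
          Real.Gamma (expAlpha o + 1 / 2)) o :=
      by
        have hc : HasDerivAt (fun o => Real.Gamma (expAlpha o + 1 / 2))
            (deriv Real.Gamma (expAlpha o + 1 / 2) * Real.exp o) o := by
          have hc0 := hg2.comp o hα'
          exact hc0
        exact hc.log (Real.Gamma_pos_of_pos (hαpos' o)).ne'
    have h1 : HasDerivAt (fun _ : ℝ => (1 / 2 : ℝ) * Real.log (Real.pi / v)) 0 o :=
      hasDerivAt_const _ _
    have h2 : HasDerivAt (fun o => expAlpha o * c1) (Real.exp o * c1) o := hα.mul_const c1
    have h3 : HasDerivAt (fun o => (expAlpha o + 1 / 2) * c2) (Real.exp o * c2) o :=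
      hα'.mul_const c2
    have h6 : HasDerivAt (fun o => lam * (|y - γ| * (2 * v + expAlpha o)))
        (lam * (|y - γ| * Real.exp o)) o :=
      ((hα.const_add (2 * v)).const_mul _).const_mul lam
    have := ((((h1.sub h2).add h3).add h4).sub h5).add h6
    refine this.congr_deriv ?_
    simp only [hG]
    field_simp
    ring
  have hd : deriv (fun o : ℝ =>
        ((1 / 2) * Real.log (Real.pi / v)
          - expAlpha o * c1
          + (expAlpha o + 1 / 2) * c2
          + Real.log (Real.Gamma (expAlpha o))
          - Real.log (Real.Gamma (expAlpha o + 1 / 2)))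
        + lam * (|y - γ| * (2 * v + expAlpha o)))
      = fun o => Real.exp o * G o := funext fun o => (hderiv o).deriv
  rw [hd]
  have hα1 : Tendsto expAlpha atBot (nhds 1) := by
    have := Real.tendsto_exp_atBot.add (tendsto_const_nhds (x := (1:ℝ)))
    rw [zero_add] at this
    exact this
  have hα2 : Tendsto (fun o => expAlpha o + 1 / 2) atBot (nhds (3 / 2)) := by
    have := hα1.add (tendsto_const_nhds (x := (1/2:ℝ)))
    norm_num at this ⊢
    convert this using 2 <;> norm_num
  have hdg : ∀ x : ℝ, 0 < x →
      ContinuousAt (fun t => deriv Real.Gamma t / Real.Gamma t) x := fun x hx =>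
    (contAt_deriv_realGamma hx).div
      (hasDerivAt_realGamma hx).differentiableAt.continuousAt
      (Real.Gamma_pos_of_pos hx).ne'
  have hGlim : Tendsto G atBot (nhds (-c1 + c2 + deriv Real.Gamma 1 / Real.Gamma 1
      - deriv Real.Gamma (3 / 2) / Real.Gamma (3 / 2) + lam * |y - γ|)) := by
    refine Tendsto.add (Tendsto.sub (Tendsto.add tendsto_const_nhds ?_) ?_) tendsto_const_nhds
    · exact ((hdg 1 one_pos).tendsto).comp hα1
    · exact ((hdg (3 / 2) (by norm_num)).tendsto).comp hα2
  have := Real.tendsto_exp_atBot.mul hGlim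
  simpa using this
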